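/- Assume P, H, V, Θ and Ô are as in the context. Let i and j be two distinct members of H ∪ V (viewed as vertices of Θ), let p ∈ i and q ∈ j. Then there is a rectilinear path from p to q in P with exactly Ô(i,j) links; in particular rld(p,q) ≤ Ô(i,j). -/

import Mathlib

/-- A segment with endpoints `p` and `q` is axis-parallel: horizontal (equal
`y`-coordinates) or vertical (equal `x`-coordinates). -/
def AxisParallel (p q : ℝ × ℝ) : Prop := p.2 = q.2 ∨ p.1 = q.1

/-- `f` describes a rectilinear path from `p` to `q` in `P` with `k ≥ 1` links:
`f 0 = p`, `f k = q`, and each closed segment from `f t` to `f (t+1)` is contained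
in `P` and is axis-parallel. -/
def IsRectPath (P : Set (ℝ × ℝ)) (p q : ℝ × ℝ) (k : ℕ) (f : ℕ → ℝ × ℝ) : Prop :=
  1 ≤ k ∧ f 0 = p ∧ f k = q ∧
    ∀ t < k, segment ℝ (f t) (f (t + 1)) ⊆ P ∧ AxisParallel (f t) (f (t + 1))

/-- The rectilinear link distance: the minimum link length of a rectilinear path
from `p` to `q` in `P`. -/
noncomputable def rld (P : Set (ℝ × ℝ)) (p q : ℝ × ℝ) : ℕ :=
  sInf {k : ℕ | ∃ f : ℕ → ℝ × ℝ, IsRectPath P p q k f}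

/-- A box: a closed axis-aligned rectangle `[a,b] × [c,d]` with `a < b` and `c < d`. -/
def IsBox (B : Set (ℝ × ℝ)) : Prop :=
  ∃ a b c d : ℝ, a < b ∧ c < d ∧ B = Set.Icc a b ×ˢ Set.Icc c d

/-- The graph of oriented distances `Θ`: the bipartite graph on the (disjoint) union of
the families `H` and `V`, with an edge between `h ∈ H` and `v ∈ V` exactly when
`h ∩ v ≠ ∅`. -/
def thetaGraph (H V : Set (Set (ℝ × ℝ))) :
    SimpleGraph {B : Set (ℝ × ℝ) // B ∈ H ∪ V} where
  Adj x y := x ≠ y ∧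
    ((x.1 ∈ H ∧ y.1 ∈ V) ∨ (x.1 ∈ V ∧ y.1 ∈ H)) ∧ (x.1 ∩ y.1).Nonempty
  symm := by
    constructor
    rintro x y ⟨hxy, hor, hne⟩
    refine ⟨hxy.symm, ?_, by rwa [Set.inter_comm]⟩
    rcases hor with ⟨h1, h2⟩ | ⟨h1, h2⟩
    · exact Or.inr ⟨h2, h1⟩
    · exact Or.inl ⟨h2, h1⟩
  loopless := by constructor; rintro x ⟨hxx, -⟩; exact hxx rfl

/-- The oriented distance `Ô(i,j)`: the graph distance in `Θ` plus one. -/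
noncomputable def oDist (H V : Set (Set (ℝ × ℝ)))
    (i j : {B : Set (ℝ × ℝ) // B ∈ H ∪ V}) : ℕ :=
  (thetaGraph H V).dist i j + 1

/-- `H` and `V` form a good decomposition of `P`: they are finite families of boxes
contained in `P`; every horizontal (resp. vertical) segment contained in `P` lies in
some member of `H` (resp. `V`); for `h ∈ H` and `v ∈ V` meeting each other, `h ∩ v`
is the product of the `x`-projection of `v` with the `y`-projection of `h`; and the
graph of oriented distances is connected. -/
structure GoodDecomp (P : Set (ℝ × ℝ)) (H V : Set (Set (ℝ × ℝ))) : Prop where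
  finH : H.Finite
  finV : V.Finite
  box : ∀ B ∈ H ∪ V, IsBox B
  sub : ∀ B ∈ H ∪ V, B ⊆ P
  covH : ∀ p q : ℝ × ℝ, p.2 = q.2 → segment ℝ p q ⊆ P → ∃ h ∈ H, segment ℝ p q ⊆ h
  covV : ∀ p q : ℝ × ℝ, p.1 = q.1 → segment ℝ p q ⊆ P → ∃ v ∈ V, segment ℝ p q ⊆ v
  cross : ∀ h ∈ H, ∀ v ∈ V, (h ∩ v).Nonempty →
    h ∩ v = (Prod.fst '' v) ×ˢ (Prod.snd '' h)
  conn : (thetaGraph H V).Connected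


lemma IsBox.convex {B : Set (ℝ × ℝ)} (hB : IsBox B) : Convex ℝ B := by
  obtain ⟨a, b, c, d, -, -, rfl⟩ := hB
  exact (convex_Icc a b).prod (convex_Icc c d)

lemma seg_subset_P {P : Set (ℝ × ℝ)} {H V : Set (Set (ℝ × ℝ))}
    (hgood : GoodDecomp P H V) {B : Set (ℝ × ℝ)} (hB : B ∈ H ∪ V)
    {x y : ℝ × ℝ} (hx : x ∈ B) (hy : y ∈ B) : segment ℝ x y ⊆ P :=
  (((hgood.box B hB).convex).segment_subset hx hy).trans (hgood.sub B hB)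

lemma mix_mem {P : Set (ℝ × ℝ)} {H V : Set (Set (ℝ × ℝ))}
    (hgood : GoodDecomp P H V) {h v : Set (ℝ × ℝ)} (hh : h ∈ H) (hv : v ∈ V)
    (hne : (h ∩ v).Nonempty) {a b : ℝ × ℝ} (ha : a ∈ v) (hb : b ∈ h) :
    (a.1, b.2) ∈ h ∩ v := by
  rw [hgood.cross h hh v hv hne]
  exact ⟨⟨a, ha, rfl⟩, ⟨b, hb, rfl⟩⟩

lemma isRectPath_single {P : Set (ℝ × ℝ)} {p q : ℝ × ℝ}
    (h1 : segment ℝ p q ⊆ P) (h2 : AxisParallel p q) :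
    IsRectPath P p q 1 (fun t => if t = 0 then p else q) := by
  refine ⟨le_refl 1, rfl, rfl, ?_⟩
  intro t ht
  interval_cases t
  simpa using ⟨h1, h2⟩

lemma isRectPath_prepend {P : Set (ℝ × ℝ)} {p p' q : ℝ × ℝ} {k : ℕ} {f : ℕ → ℝ × ℝ}
    (hf : IsRectPath P p' q k f) (h1 : segment ℝ p p' ⊆ P) (h2 : AxisParallel p p') :
    IsRectPath P p q (k + 1) (fun t => if t = 0 then p else f (t - 1)) := by
  obtain ⟨hk, hf0, hfk, hseg⟩ := hf
  refine ⟨le_add_self, rfl, by simpa using hfk, ?_⟩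
  intro t ht
  rcases t with _ | s
  · simpa [hf0] using ⟨h1, h2⟩
  · simpa using hseg s (by omega)

lemma exists_rectPath_of_walk {P : Set (ℝ × ℝ)} {H V : Set (Set (ℝ × ℝ))}
    (hgood : GoodDecomp P H V) :
    ∀ {i j : {B : Set (ℝ × ℝ) // B ∈ H ∪ V}} (w : (thetaGraph H V).Walk i j),
      1 ≤ w.length → ∀ p q : ℝ × ℝ, p ∈ i.1 → q ∈ j.1 →
      ∃ f : ℕ → ℝ × ℝ, IsRectPath P p q (w.length + 1) f := by
  intro i j w
  induction w with
  | nil => intro h; simp at h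
  | @cons i i₁ j hadj w ih =>
    intro _ p q hp hq
    obtain ⟨-, hrole, hne⟩ := hadj
    by_cases hw : w.length = 0
    · -- base case: i₁ = j
      have hij' : i₁ = j := SimpleGraph.Walk.eq_of_length_eq_zero hw
      subst hij'
      have hq' : q ∈ i₁.1 := hq
      rcases hrole with ⟨hiH, hi₁V⟩ | ⟨hiV, hi₁H⟩
      · -- i horizontal, i₁ vertical; midpoint m = (q.1, p.2)
        have hm : ((q.1 : ℝ), (p.2 : ℝ)) ∈ i.1 ∩ i₁.1 := mix_mem hgood hiH hi₁V hne hq' hp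
        have h2 : IsRectPath P ((q.1, p.2) : ℝ × ℝ) q 1 _ :=
          isRectPath_single (seg_subset_P hgood i₁.2 hm.2 hq') (Or.inr rfl)
        have h3 := isRectPath_prepend h2 (seg_subset_P hgood i.2 hp hm.1) (Or.inl rfl)
        exact ⟨_, by show IsRectPath P p q (w.length + 1 + 1) _; simpa [hw] using h3⟩
      · -- i vertical, i₁ horizontal; midpoint m = (p.1, q.2)
        have hm : ((p.1 : ℝ), (q.2 : ℝ)) ∈ i₁.1 ∩ i.1 :=
          mix_mem hgood hi₁H hiV (by rwa [Set.inter_comm] at hne) hp hq'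
        have h2 : IsRectPath P ((p.1, q.2) : ℝ × ℝ) q 1 _ :=
          isRectPath_single (seg_subset_P hgood i₁.2 hm.1 hq') (Or.inl rfl)
        have h3 := isRectPath_prepend h2 (seg_subset_P hgood i.2 hp hm.2) (Or.inr rfl)
        exact ⟨_, by show IsRectPath P p q (w.length + 1 + 1) _; simpa [hw] using h3⟩
    · -- inductive step
      obtain ⟨z, hz⟩ := hne
      rcases hrole with ⟨hiH, hi₁V⟩ | ⟨hiV, hi₁H⟩
      · have hm : ((z.1 : ℝ), (p.2 : ℝ)) ∈ i.1 ∩ i₁.1 := mix_mem hgood hiH hi₁V ⟨z, hz⟩ hz.2 hp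
        obtain ⟨f, hf⟩ := ih (by omega) (z.1, p.2) q hm.2 hq
        have h3 := isRectPath_prepend hf (seg_subset_P hgood i.2 hp hm.1) (Or.inl rfl)
        exact ⟨_, by show IsRectPath P p q (w.length + 1 + 1) _; simpa using h3⟩
      · have hm : ((p.1 : ℝ), (z.2 : ℝ)) ∈ i₁.1 ∩ i.1 :=
          mix_mem hgood hi₁H hiV ⟨z, hz.2, hz.1⟩ hp hz.2
        obtain ⟨f, hf⟩ := ih (by omega) (p.1, z.2) q hm.1 hq
        have h3 := isRectPath_prepend hf (seg_subset_P hgood i.2 hp hm.2) (Or.inr rfl)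
        exact ⟨_, by show IsRectPath P p q (w.length + 1 + 1) _; simpa using h3⟩

/-- If `i ≠ j` are vertices of `Θ`, `p ∈ i` and `q ∈ j`, then there is a rectilinear
path from `p` to `q` in `P` with exactly `Ô(i,j)` links; in particular
`rld(p,q) ≤ Ô(i,j)`. -/
theorem exists_rectPath_of_oDist (P : Set (ℝ × ℝ)) (H V : Set (Set (ℝ × ℝ)))
    (hgood : GoodDecomp P H V)
    (i j : {B : Set (ℝ × ℝ) // B ∈ H ∪ V}) (hij : i ≠ j)
    (p q : ℝ × ℝ) (hp : p ∈ i.1) (hq : q ∈ j.1) :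
    (∃ f : ℕ → ℝ × ℝ, IsRectPath P p q (oDist H V i j) f) ∧
      rld P p q ≤ oDist H V i j := by
  obtain ⟨w, hw⟩ := hgood.conn.exists_walk_length_eq_dist i j
  have hlen : 1 ≤ w.length := by
    by_contra hc
    have hw0 : w.length = 0 := by omega
    exact hij (SimpleGraph.Walk.eq_of_length_eq_zero hw0)
  obtain ⟨f, hf⟩ := exists_rectPath_of_walk hgood w hlen p q hp hq
  rw [hw] at hf
  have hmem : oDist H V i j ∈ {k : ℕ | ∃ f : ℕ → ℝ × ℝ, IsRectPath P p q k f} := ⟨f, hf⟩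
  exact ⟨⟨f, hf⟩, Nat.sInf_le hmem⟩
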